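/- Let α = (√5 - 1)/2, let F_n be the Fibonacci numbers, and let g₀(x) = {x} − 1/2 where {x} denotes the fractional part. Set T_k = ∑_{j=1}^{k} g₀(jα). Then the subsequence T_{F_{2n}} converges as n → ∞ and the subsequence T_{F_{2n+1}} converges as n → ∞. -/

import Mathlib

open Real Finset Filter

lemma fibA (α : ℝ) (hα2 : α^2 = 1 - α) :
    ∀ n : ℕ, (Nat.fib (n+1) : ℝ) * α = (Nat.fib n : ℝ) - (-α)^(n+1) := by
  intro n
  induction n using Nat.twoStepInduction with
  | zero => simp
  | one => simp [Nat.fib]; nlinarith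
  | more n ih1 ih2 =>
      have h : Nat.fib (n+2+1) = Nat.fib (n+1) + Nat.fib (n+2) := Nat.fib_add_two
      have h2 : Nat.fib (n+2) = Nat.fib n + Nat.fib (n+1) := Nat.fib_add_two
      rw [h]
      push_cast
      rw [h2] at ih2 ⊢
      push_cast at ih2 ⊢
      have e1 : (-α)^(n+2+1) = (-α)^(n+1) * α^2 := by ring
      have e2 : (-α)^(n+2) = (-α)^(n+1) * (-α) := by ring
      rw [e1]
      rw [e2] at ih2
      linear_combination ih1 + ih2 - (-α)^(n+1) * hα2 - 2*(-1:ℝ)^n * α^(n+1) * hα2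

lemma fibB (α : ℝ) (hα2 : α^2 = 1 - α) :
    ∀ n : ℕ, (2*α+1) * (Nat.fib n : ℝ) * α^n = 1 - (-1:ℝ)^n * α^(2*n) := by
  intro n
  induction n using Nat.twoStepInduction with
  | zero => simp
  | one => simp [Nat.fib]; nlinarith
  | more n ih1 ih2 =>
      rw [Nat.fib_add_two]
      push_cast
      have e1 : α^(n+2) = α^n * α^2 := by ring
      have e3 : α^(2*(n+2)) = α^(2*n) * α^2 * α^2 := by ring
      have e5 : (-1:ℝ)^(n+2) = (-1)^n := by ring
      have e2 : α^(n+1) = α^n * α := by ring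
      have e4 : α^(2*(n+1)) = α^(2*n) * α^2 := by ring
      have e6 : (-1:ℝ)^(n+1) = -(-1)^n := by ring
      rw [e1, e3, e5]
      rw [e2, e4, e6] at ih2
      linear_combination α * ih2 + α^2 * ih1 + (1 + (-1:ℝ)^n * α^(2*n) * α^2) * hα2

lemma qbound (α : ℝ) (hα2 : α^2 = 1 - α) (h0 : 0 < α) (h1 : α < 1) (n : ℕ)
    (q : ℕ) (hq2 : q ≤ Nat.fib (n+2)) : (q:ℝ) * α^(n+1) < 1 := by
  have hB := fibB α hα2 (n+2)
  have hc : (q:ℝ) ≤ Nat.fib (n+2) := by exact_mod_cast hq2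
  have hp1 : α^(2*(n+2)) < α^2 := by
    apply pow_lt_pow_right_of_lt_one₀ h0 h1; omega
  have hp3 : (0:ℝ) < α^(n+2) := pow_pos h0 _
  have hX : (0:ℝ) ≤ α^(2*(n+2)) := by positivity
  have hpos : (0:ℝ) < 2*α+1 := by linarith
  have s1 : (2*α+1) * ((q:ℝ)*α^(n+2)) ≤ (2*α+1)*((Nat.fib (n+2):ℝ)*α^(n+2)) :=
    mul_le_mul_of_nonneg_left (mul_le_mul_of_nonneg_right hc hp3.le) hpos.le
  have s2 : (2*α+1)*((Nat.fib (n+2):ℝ)*α^(n+2)) ≤ 1 + α^(2*(n+2)) := by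
    rcases neg_one_pow_eq_or ℝ (n+2) with h | h <;> rw [h] at hB <;> nlinarith
  have s3 : 1 + α^(2*(n+2)) < (2*α+1)*α := by nlinarith
  have s4 : (q:ℝ)*α^(n+2) < α := by
    have := lt_of_le_of_lt (le_trans s1 s2) s3
    exact (mul_lt_mul_iff_right₀ hpos).mp this
  have e : (q:ℝ)*α^(n+2) = ((q:ℝ)*α^(n+1))*α := by ring
  rw [e] at s4
  nlinarith

lemma dioph (α : ℝ) (hα2 : α^2 = 1 - α) (h0 : 0 < α) (h1 : α < 1)
    (hirr : Irrational α) (n : ℕ) (q : ℕ) (hq1 : 1 ≤ q) (hq2 : q ≤ Nat.fib (n+2))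
    (p : ℤ) : α^(n+3) < |(q:ℝ)*α - p| := by
  have hQ : (1:ℝ) ≤ (q:ℝ) := by exact_mod_cast hq1
  have hq0 : (q:ℝ) ≠ 0 := by positivity
  -- key algebraic identity
  have key : ((p:ℝ) - q*α)*((p:ℝ) + q*(1+α)) = ((p^2 + p*q - q^2 : ℤ) : ℝ) := by
    push_cast
    linear_combination (-(q:ℝ)^2) * hα2
  have hN : (p^2 + p*q - q^2 : ℤ) ≠ 0 := by
    intro h
    rw [h] at key
    push_cast at key
    rcases mul_eq_zero.mp key with h2 | h2
    · exact hirr ⟨(p:ℚ)/(q:ℚ), by push_cast; field_simp; linarith⟩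
    · exact hirr ⟨(-(p:ℚ)-(q:ℚ))/(q:ℚ), by push_cast; field_simp; linarith⟩
  have habs : (1:ℝ) ≤ |(p:ℝ) - q*α| * |(p:ℝ) + q*(1+α)| := by
    rw [← abs_mul, key]
    have : (1:ℤ) ≤ |p^2 + p*q - q^2| := Int.one_le_abs hN
    calc (1:ℝ) ≤ |(p^2 + p*q - q^2 : ℤ)| := by exact_mod_cast this
    _ = |((p^2 + p*q - q^2 : ℤ) : ℝ)| := by push_cast; ring_nf
  have hcomm : |(q:ℝ)*α - p| = |(p:ℝ) - q*α| := abs_sub_comm _ _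
  rw [hcomm]
  rcases le_or_gt (p:ℝ) 0 with hp | hp
  · -- p ≤ 0 : |p - qα| ≥ qα ≥ α > α^{n+3}
    have h2 : α ≤ |(p:ℝ) - q*α| := by
      rw [abs_sub_comm]
      have : α ≤ (q:ℝ)*α - p := by nlinarith
      calc α ≤ (q:ℝ)*α - p := this
      _ ≤ |(q:ℝ)*α - p| := le_abs_self _
    have : α^(n+3) < α^1 := pow_lt_pow_right_of_lt_one₀ h0 h1 (by omega)
    simpa using lt_of_lt_of_le (by simpa using this) h2
  · -- p ≥ 1
    have hp1 : (1:ℝ) ≤ p := by exact_mod_cast hp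
    rcases le_or_gt (1/2 : ℝ) (|(p:ℝ) - q*α|) with hhalf | hhalf
    · have h3 : α^3 < 1/2 := by nlinarith
      have : α^(n+3) ≤ α^3 := pow_le_pow_of_le_one h0.le h1.le (by omega)
      linarith
    · -- |p - qα| < 1/2 hence p ≤ q
      have hple : (p:ℝ) ≤ q := by
        have h4 : (p:ℝ) - q*α ≤ |(p:ℝ) - q*α| := le_abs_self _
        have h5 : (p:ℝ) < q + 1/2 := by nlinarith
        have : p < (q:ℤ) + 1 := by exact_mod_cast (by push_cast; linarith : (p:ℝ) < ((q:ℤ):ℝ) + 1)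
        exact_mod_cast Int.lt_add_one_iff.mp this
      have hpos2 : (0:ℝ) < (p:ℝ) + q*(1+α) := by nlinarith
      have hqb := qbound α hα2 h0 h1 n q hq2
      have bound : ((p:ℝ) + q*(1+α)) * α^(n+3) < 1 := by
        have e1 : ((q:ℝ)*(2+α)) * α^(n+3) = ((q:ℝ)*α^(n+1)) * ((2+α)*α^2) := by ring
        have e2 : (2+α)*α^2 = 1 := by nlinarith
        have h6 : ((p:ℝ) + q*(1+α)) * α^(n+3) ≤ ((q:ℝ)*(2+α)) * α^(n+3) := by
          have : (0:ℝ) < α^(n+3) := pow_pos h0 _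
          nlinarith
        calc ((p:ℝ) + q*(1+α)) * α^(n+3) ≤ ((q:ℝ)*(2+α)) * α^(n+3) := h6
        _ = ((q:ℝ)*α^(n+1)) * ((2+α)*α^2) := e1
        _ = (q:ℝ)*α^(n+1) := by rw [e2]; ring
        _ < 1 := hqb
      -- conclude
      have h7 : |(p:ℝ) + q*(1+α)| = (p:ℝ) + q*(1+α) := abs_of_pos hpos2
      rw [h7] at habs
      have h8 : α^(n+3) * ((p:ℝ) + q*(1+α)) < |(p:ℝ) - q*α| * ((p:ℝ) + q*(1+α)) := by
        calc α^(n+3) * ((p:ℝ) + q*(1+α)) < 1 := by linarith [bound]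
        _ ≤ |(p:ℝ) - q*α| * ((p:ℝ) + q*(1+α)) := habs
      exact lt_of_mul_lt_mul_right h8 hpos2.le

lemma fractShift (α : ℝ) (hα2 : α^2 = 1 - α) (h0 : 0 < α) (h1 : α < 1)
    (hirr : Irrational α) (m : ℕ) (i : ℕ) (hi1 : 1 ≤ i) (hi2 : i ≤ Nat.fib (m+2)) :
    Int.fract ((i:ℝ)*α - (-α)^(m+3)) = Int.fract ((i:ℝ)*α) - (-α)^(m+3) := by
  set x : ℝ := (i:ℝ)*α with hx
  have hs : |(-α)^(m+3)| = α^(m+3) := by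
    rw [abs_pow, abs_neg, abs_of_pos h0]
  have a1 : α^(m+3) < Int.fract x := by
    have h := dioph α hα2 h0 h1 hirr m i hi1 hi2 ⌊x⌋
    have e1 : |x - (⌊x⌋:ℝ)| = Int.fract x := by
      rw [← Int.self_sub_floor]
      exact abs_of_nonneg (Int.fract_nonneg x)
    rwa [← hx, e1] at h
  have a2 : α^(m+3) < 1 - Int.fract x := by
    have h := dioph α hα2 h0 h1 hirr m i hi1 hi2 (⌊x⌋ + 1)
    have e0 : x - ((⌊x⌋ + 1 : ℤ):ℝ) = Int.fract x - 1 := by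
      push_cast
      rw [Int.fract]; ring
    have e1 : |x - ((⌊x⌋ + 1 : ℤ):ℝ)| = 1 - Int.fract x := by
      rw [e0, abs_of_nonpos (by linarith [Int.fract_lt_one x])]
      ring
    rwa [← hx, e1] at h
  have hb1 : (-α)^(m+3) ≤ α^(m+3) := le_of_abs_le (le_of_eq hs)
  have hb2 : -α^(m+3) ≤ (-α)^(m+3) := neg_le_of_abs_le (le_of_eq hs)
  have key : x - (-α)^(m+3) = (⌊x⌋ : ℝ) + (Int.fract x - (-α)^(m+3)) := by
    rw [Int.fract]; ring
  rw [key, Int.fract_intCast_add, Int.fract_eq_self.mpr ⟨by linarith, by linarith⟩]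

lemma recur (α : ℝ) (hα2 : α^2 = 1 - α) (h0 : 0 < α) (h1 : α < 1)
    (hirr : Irrational α) (g₀ : ℝ → ℝ) (hg₀ : ∀ x, g₀ x = Int.fract x - 1 / 2)
    (T : ℕ → ℝ) (hT : ∀ k, T k = ∑ j ∈ Finset.Icc 1 k, g₀ (j * α)) (m : ℕ) :
    T (Nat.fib (m+4)) = T (Nat.fib (m+3)) + T (Nat.fib (m+2))
      - (Nat.fib (m+2) : ℝ) * (-α)^(m+3) := by
  have hicc : ∀ k : ℕ, Finset.Icc 1 k = Finset.Ioc 0 k := by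
    intro k; ext j; simp; omega
  have hfib4 : Nat.fib (m+4) = Nat.fib (m+3) + Nat.fib (m+2) :=
    (Nat.fib_add_two).trans (Nat.add_comm _ _)
  have hsplit : ∑ j ∈ Finset.Icc 1 (Nat.fib (m+4)), g₀ (j * α)
      = (∑ j ∈ Finset.Icc 1 (Nat.fib (m+3)), g₀ (j * α))
        + ∑ i ∈ Finset.Icc 1 (Nat.fib (m+2)), g₀ ((Nat.fib (m+3) + i : ℕ) * α) := by
    rw [hicc, hicc, hicc]
    rw [← Finset.sum_Ioc_consecutive (fun j : ℕ => g₀ (j * α))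
      (Nat.zero_le (Nat.fib (m+3))) (by omega : Nat.fib (m+3) ≤ Nat.fib (m+4))]
    congr 1
    have hmap : Finset.Ioc (Nat.fib (m+3)) (Nat.fib (m+4))
        = Finset.map (addLeftEmbedding (Nat.fib (m+3))) (Finset.Ioc 0 (Nat.fib (m+2))) := by
      rw [Finset.map_add_left_Ioc, hfib4]
      norm_num
    rw [hmap, Finset.sum_map]
    rfl
  -- rewrite each shifted term
  have hterm : ∀ i ∈ Finset.Icc 1 (Nat.fib (m+2)),
      g₀ ((Nat.fib (m+3) + i : ℕ) * α) = g₀ ((i:ℕ) * α) - (-α)^(m+3) := by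
    intro i hi
    simp only [Finset.mem_Icc] at hi
    have hfa := fibA α hα2 (m+2)
    have e1 : ((Nat.fib (m+3) + i : ℕ) : ℝ) * α
        = ((i:ℝ)*α - (-α)^(m+3)) + (Nat.fib (m+2) : ℕ) := by
      push_cast
      push_cast at hfa
      nlinarith [hfa]
    rw [hg₀, hg₀, e1, Int.fract_add_natCast,
      fractShift α hα2 h0 h1 hirr m i hi.1 hi.2]
    ring
  rw [hT, hT, hT, hsplit, Finset.sum_congr rfl hterm, Finset.sum_sub_distrib,
    Finset.sum_const, Nat.card_Icc]
  simp
  ring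

lemma closedForm (α : ℝ) (hα2 : α^2 = 1 - α) (h0 : 0 < α) (h1 : α < 1)
    (hirr : Irrational α) (g₀ : ℝ → ℝ) (hg₀ : ∀ x, g₀ x = Int.fract x - 1 / 2)
    (T : ℕ → ℝ) (hT : ∀ k, T k = ∑ j ∈ Finset.Icc 1 k, g₀ (j * α)) :
    ∀ n : ℕ, 2*(2*α+1) * T (Nat.fib (n+2))
      = 2*(-1:ℝ)^n*α + α^(2*(n+2)) - (2*α+1)*(-α)^(n+2) := by
  have hhalf : 1/2 < α := by nlinarith
  intro n
  induction n using Nat.twoStepInduction with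
  | zero =>
      have hT1 : T (Nat.fib 2) = α - 1/2 := by
        rw [hT]
        norm_num [Nat.fib]
        rw [hg₀]
        rw [Int.fract_eq_self.mpr ⟨h0.le, h1⟩]
      rw [hT1]
      norm_num
      linear_combination (-α^2 + 3*α + 1) * hα2
  | one =>
      have hf3 : Nat.fib 3 = 2 := rfl
      have hfr2 : Int.fract ((2:ℝ)*α) = 2*α - 1 := by
        have e : (2:ℝ)*α = (2*α - 1) + (1:ℤ) := by push_cast; ring
        rw [e, Int.fract_add_intCast, Int.fract_eq_self.mpr ⟨by linarith, by linarith⟩]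
        push_cast
        ring
      have hT2 : T (Nat.fib 3) = 3*α - 2 := by
        rw [hT, hf3]
        rw [show Finset.Icc 1 2 = {1, 2} from rfl]
        rw [Finset.sum_insert (by norm_num), Finset.sum_singleton]
        rw [hg₀, hg₀]
        push_cast
        rw [one_mul]
        rw [Int.fract_eq_self.mpr ⟨h0.le, h1⟩, hfr2]
        ring
      rw [hT2]
      norm_num
      linear_combination (-α^4 + α^3 - 4*α^2 + 4*α + 4) * hα2
  | more n ih1 ih2 =>
      have hrec := recur α hα2 h0 h1 hirr g₀ hg₀ T hT n
      have hB := fibB α hα2 (n+2)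
      rw [hrec]
      have hs : ((-1:ℝ)^n)^2 = 1 := by
        rcases neg_one_pow_eq_or ℝ n with h | h <;> rw [h] <;> norm_num
      linear_combination ih1 + ih2 + 2*(-1:ℝ)^n*α*hB
        + (2*(-1:ℝ)^n*α^n*(2*α^3+α^2) - α^(2*n+4)*(1-α+α^2) - (2*α+1)*(-α)^(n+2)) * hα2
        - 2*α^(2*n)*α^5 * hs

/-- For the golden mean `α = (√5 - 1)/2`, Hecke's sawtooth `g₀ x = {x} - 1/2` and the
Birkhoff sums `T k = ∑_{j=1}^{k} g₀ (j α)`, the subsequences `T (F (2n))` and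
`T (F (2n+1))` both converge, where `F n` are the Fibonacci numbers. -/
theorem hecke_birkhoff_sum_fib_subsequences_converge (α : ℝ)
    (hα : α = (Real.sqrt 5 - 1) / 2)
    (g₀ : ℝ → ℝ) (hg₀ : ∀ x, g₀ x = Int.fract x - 1 / 2)
    (T : ℕ → ℝ) (hT : ∀ k, T k = ∑ j ∈ Finset.Icc 1 k, g₀ (j * α)) :
    (∃ L₁ : ℝ, Tendsto (fun n : ℕ => T (Nat.fib (2 * n))) atTop (nhds L₁)) ∧
    (∃ L₂ : ℝ, Tendsto (fun n : ℕ => T (Nat.fib (2 * n + 1))) atTop (nhds L₂)) := by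
  have h5 : Real.sqrt 5 ^ 2 = 5 := Real.sq_sqrt (by norm_num)
  have hp : (1:ℝ) < Real.sqrt 5 := by nlinarith [Real.sqrt_nonneg 5]
  have hq : Real.sqrt 5 < 3 := by nlinarith [Real.sqrt_nonneg 5]
  have hα2 : α^2 = 1 - α := by rw [hα]; nlinarith
  have h0 : 0 < α := by rw [hα]; nlinarith
  have h1 : α < 1 := by rw [hα]; nlinarith
  have hirr : Irrational α := by
    have h5i : Irrational (Real.sqrt 5) := (by norm_num : Nat.Prime 5).irrational_sqrt
    rw [hα]
    simpa using (h5i.sub_ratCast (q := 1)).div_natCast (by norm_num : (2:ℕ) ≠ 0)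
  have hE := closedForm α hα2 h0 h1 hirr g₀ hg₀ T hT
  have hpos : (0:ℝ) < 2*(2*α+1) := by linarith
  have hα4 : α^4 < 1 := by nlinarith
  have hα2lt : α^2 < 1 := by nlinarith
  have t4 : Tendsto (fun n : ℕ => α^(4*n)) atTop (nhds 0) := by
    simp_rw [pow_mul]
    exact tendsto_pow_atTop_nhds_zero_of_lt_one (by positivity) hα4
  have t2 : Tendsto (fun n : ℕ => α^(2*n)) atTop (nhds 0) := by
    simp_rw [pow_mul]
    exact tendsto_pow_atTop_nhds_zero_of_lt_one (by positivity) hα2lt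
  constructor
  · refine ⟨(2*α + 0 - (2*α+1)*0)/(2*(2*α+1)), ?_⟩
    have tv : Tendsto (fun n : ℕ => (2*α + α^(4*n) - (2*α+1)*α^(2*n))/(2*(2*α+1)))
        atTop (nhds ((2*α + 0 - (2*α+1)*0)/(2*(2*α+1)))) :=
      ((tendsto_const_nhds.add t4).sub (t2.const_mul (2*α+1))).div_const _
    refine Tendsto.congr' ?_ tv
    rw [Filter.eventuallyEq_iff_exists_mem]
    refine ⟨Set.Ici 1, Ici_mem_atTop 1, fun n hn => ?_⟩
    have hn' : 1 ≤ n := hn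
    obtain ⟨k, rfl⟩ : ∃ k, n = k + 1 := ⟨n - 1, by omega⟩
    have h := hE (2*k)
    have e : 2*k+2 = 2*(k+1) := by ring
    rw [e] at h
    have e1 : (-1:ℝ)^(2*k) = 1 := by
      rw [pow_mul]; norm_num
    have e2 : (-α)^(2*(k+1)) = α^(2*(k+1)) := Even.neg_pow ⟨k+1, by ring⟩ α
    have e3 : α^(2*(2*(k+1))) = α^(4*(k+1)) := by ring_nf
    rw [e1, e2, e3] at h
    field_simp
    linarith
  · refine ⟨(-(2*α) + 0 + (2*α+1)*0)/(2*(2*α+1)), ?_⟩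
    have t42 : Tendsto (fun n : ℕ => α^(2*(2*n+1))) atTop (nhds 0) := by
      have e : ∀ n : ℕ, α^(2*(2*n+1)) = α^(4*n) * α^2 := fun n => by ring
      simp_rw [e]
      simpa using t4.mul_const (α^2)
    have t21 : Tendsto (fun n : ℕ => α^(2*n+1)) atTop (nhds 0) := by
      have e : ∀ n : ℕ, α^(2*n+1) = α^(2*n) * α := fun n => by ring
      simp_rw [e]
      simpa using t2.mul_const α
    have tv : Tendsto (fun n : ℕ => (-(2*α) + α^(2*(2*n+1)) + (2*α+1)*α^(2*n+1))/(2*(2*α+1)))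
        atTop (nhds ((-(2*α) + 0 + (2*α+1)*0)/(2*(2*α+1)))) :=
      ((tendsto_const_nhds.add t42).add (t21.const_mul (2*α+1))).div_const _
    refine Tendsto.congr' ?_ tv
    rw [Filter.eventuallyEq_iff_exists_mem]
    refine ⟨Set.Ici 1, Ici_mem_atTop 1, fun n hn => ?_⟩
    have hn' : 1 ≤ n := hn
    obtain ⟨k, rfl⟩ : ∃ k, n = k + 1 := ⟨n - 1, by omega⟩
    have h := hE (2*k+1)
    have e : 2*k+1+2 = 2*(k+1)+1 := by ring
    rw [e] at h
    have e1 : (-1:ℝ)^(2*k+1) = -1 := by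
      rw [pow_succ, pow_mul]; norm_num
    have e2 : (-α)^(2*(k+1)+1) = -α^(2*(k+1)+1) := Odd.neg_pow ⟨k+1, by ring⟩ α
    rw [e1, e2] at h
    field_simp
    linarith
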